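/- The delay-sensitive MPI ν_i^* = (c/ρ){n − ρ/(1−ρ) + i·ρ^i/(1−ρ^i)} + rμ with c > 0 and 0 < ρ < 1 is strictly decreasing in the integer i ≥ 1, i.e., shorter nonempty queues receive higher index values. -/
import Mathlib

private lemma key_step (ρ : ℝ) (hρ0 : 0 < ρ) (hρ1 : ρ < 1) :
    ∀ i : ℕ, 1 ≤ i → ((i : ℝ) + 1) * ρ < (i : ℝ) + ρ ^ (i + 1) := by
  intro i hi
  induction i with
  | zero => omega
  | succ k ih =>
    rcases Nat.eq_or_lt_of_le hi with h | h
    · have : k = 0 := by omega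
      subst this
      push_cast
      nlinarith [sq_nonneg (1 - ρ)]
    · have hk : 1 ≤ k := by omega
      have IH := ih hk
      have hpow : ρ ^ (k + 1) ≤ 1 := pow_le_one₀ hρ0.le hρ1.le
      have : ρ ^ (k + 1) * (1 - ρ) ≤ 1 - ρ := by nlinarith
      push_cast
      have hexp : ρ ^ (k + 1 + 1) = ρ ^ (k + 1) * ρ := by ring
      nlinarith

private lemma frac_step (ρ : ℝ) (hρ0 : 0 < ρ) (hρ1 : ρ < 1) (i : ℕ) (hi : 1 ≤ i) :
    ((i : ℝ) + 1) * ρ ^ (i + 1) / (1 - ρ ^ (i + 1)) < (i : ℝ) * ρ ^ i / (1 - ρ ^ i) := by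
  have hpi : ρ ^ i < 1 := pow_lt_one₀ hρ0.le hρ1 (by omega)
  have hpi1 : ρ ^ (i + 1) < 1 := pow_lt_one₀ hρ0.le hρ1 (by omega)
  have hdi : 0 < 1 - ρ ^ i := by linarith
  have hdi1 : 0 < 1 - ρ ^ (i + 1) := by linarith
  rw [div_lt_div_iff₀ hdi1 hdi]
  have hkey := key_step ρ hρ0 hρ1 i hi
  have hppos : 0 < ρ ^ i := pow_pos hρ0 i
  have hexp : ρ ^ (i + 1) = ρ ^ i * ρ := by ring
  -- goal: (i+1) * ρ^(i+1) * (1 - ρ^i) < i * ρ^i * (1 - ρ^(i+1))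
  nlinarith [mul_pos hppos hppos, mul_pos (mul_pos hppos hppos) hρ0]

private lemma frac_mono (ρ : ℝ) (hρ0 : 0 < ρ) (hρ1 : ρ < 1) :
    ∀ i j : ℕ, 1 ≤ i → i < j →
      (j : ℝ) * ρ ^ j / (1 - ρ ^ j) < (i : ℝ) * ρ ^ i / (1 - ρ ^ i) := by
  intro i j hi hij
  induction j with
  | zero => omega
  | succ k ih =>
    rcases Nat.lt_or_ge i k with h | h
    · have := ih h
      have hk : 1 ≤ k := by omega
      have := frac_step ρ hρ0 hρ1 k hk
      push_cast at *
      linarith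
    · have : i = k := by omega
      subst this
      have := frac_step ρ hρ0 hρ1 i hi
      push_cast at *
      linarith

/-- The delay-sensitive MPI
`ν_i^* = (c/ρ)[n − ρ/(1−ρ) + i·ρ^i/(1−ρ^i)] + rμ`, with `c > 0` and `0 < ρ < 1`,
is strictly decreasing in the integer `1 ≤ i ≤ n`: shorter nonempty queues receive
higher index values. -/
theorem stmt_12 (n : ℕ) (hn : 1 ≤ n) (c r μ ρ : ℝ)
    (hc : 0 < c) (hr : 0 ≤ r) (hμ : 0 < μ) (hρ0 : 0 < ρ) (hρ1 : ρ < 1) :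
    ∀ i j : ℕ, 1 ≤ i → i < j → j ≤ n →
      (c / ρ) * ((n : ℝ) - ρ / (1 - ρ) + (j : ℝ) * ρ ^ j / (1 - ρ ^ j)) + r * μ
        < (c / ρ) * ((n : ℝ) - ρ / (1 - ρ) + (i : ℝ) * ρ ^ i / (1 - ρ ^ i)) + r * μ := by
  intro i j hi hij hjn
  have h := frac_mono ρ hρ0 hρ1 i j hi hij
  have hcρ : 0 < c / ρ := div_pos hc hρ0
  have := mul_lt_mul_of_pos_left h hcρ
  nlinarith [this]
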